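/- If A is a graded algebra with straightening law on a poset P over B, and I, J ⊆ P are order ideals, then the ring ideal generated by I intersected with the ring ideal generated by J equals the ring ideal generated by I ∩ J. -/

import Mathlib

/-- A graded algebra with straightening law (ASL) on a poset `ι` over `B`.
`𝒜` is the grading, `emb : ι → A` realizes the poset as elements of `A`. -/
structure ASL (B : Type*) [CommRing B] (A : Type*) [CommRing A] [Algebra B A]
    (ι : Type*) [PartialOrder ι] (𝒜 : ℕ → Submodule B A) [GradedAlgebra 𝒜] where
  /-- `A_0 = B` (the degree-zero part is the image of `B`). -/
  zero_eq : 𝒜 0 = 1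
  /-- The elements of the poset inside `A`. -/
  emb : ι → A
  /-- Each poset element is homogeneous of positive degree. -/
  homog : ∀ x : ι, ∃ d, 0 < d ∧ emb x ∈ 𝒜 d
  /-- The poset generates `A` as a `B`-algebra. -/
  generates : Algebra.adjoin B (Set.range emb) = ⊤
  /-- The standard monomials (products over weakly increasing chains) form a
  free `B`-module basis of `A`. -/
  bas : Module.Basis {l : List ι // l.Chain' (· ≤ ·)} B A
  bas_eq : ∀ l : {l : List ι // l.Chain' (· ≤ ·)}, bas l = (l.1.map emb).prod
  /-- Straightening relations: for incomparable `ξ, ν`, every standard monomial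
  appearing in `ξν` has a factor `ζ ≤ ξ, ζ ≤ ν`. -/
  straighten : ∀ ξ ν : ι, ¬ ξ ≤ ν → ¬ ν ≤ ξ →
    ∀ l : {l : List ι // l.Chain' (· ≤ ·)}, bas.repr (emb ξ * emb ν) l ≠ 0 →
      ∃ ζ ∈ l.1, ζ ≤ ξ ∧ ζ ≤ ν

namespace ASLAux

variable {B A ι : Type*} [CommRing B] [CommRing A] [Algebra B A]
    [PartialOrder ι] {𝒜 : ℕ → Submodule B A} [GradedAlgebra 𝒜]

/-- The set of standard-monomial indices meeting `S`. -/
def T (S : Set ι) : Set {l : List ι // l.Chain' (· ≤ ·)} := {l | ∃ ζ ∈ l.1, ζ ∈ S}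

/-- The `B`-span of standard monomials containing a factor from `S`. -/
def M (asl : ASL B A ι 𝒜) (S : Set ι) : Submodule B A :=
  Submodule.span B (asl.bas '' T S)

lemma T_mono {S S' : Set ι} (h : S ⊆ S') : T (ι := ι) S ⊆ T S' :=
  fun _ ⟨ζ, hζl, hζS⟩ => ⟨ζ, hζl, h hζS⟩

lemma M_mono (asl : ASL B A ι 𝒜) {S S' : Set ι} (h : S ⊆ S') : M asl S ≤ M asl S' :=
  Submodule.span_mono (Set.image_mono (T_mono h))

lemma mem_M_iff (asl : ASL B A ι 𝒜) {S : Set ι} {x : A} :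
    x ∈ M asl S ↔ ∀ l, asl.bas.repr x l ≠ 0 → l ∈ T S := by
  rw [M, Module.Basis.mem_span_image]
  constructor
  · intro h l hl
    exact h (Finsupp.mem_support_iff.mpr hl)
  · intro h l hl
    exact h l (Finsupp.mem_support_iff.mp hl)

/-- Factor out `emb ζ` from a standard monomial containing `ζ`. -/
lemma factor (asl : ASL B A ι 𝒜) {l : {l : List ι // l.Chain' (· ≤ ·)}} {ζ : ι}
    (hζ : ζ ∈ l.1) : ∃ w : A, asl.bas l = asl.emb ζ * w := by
  classical
  refine ⟨((l.1.map asl.emb).erase (asl.emb ζ)).prod, ?_⟩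
  rw [asl.bas_eq, ← List.prod_erase (List.mem_map_of_mem (f := asl.emb) hζ)]

/-- Key lemma: multiplication by `emb ν` lands in the span of standard monomials
containing a factor `≤ ν`. -/
lemma key [Fintype ι] (asl : ASL B A ι 𝒜) (ν : ι) :
    ∀ x : A, asl.emb ν * x ∈ M asl {ζ | ζ ≤ ν} := by
  induction ν using WellFoundedLT.induction with
  | _ ν IH =>
  have hb : ∀ l : {l : List ι // l.Chain' (· ≤ ·)},
      asl.emb ν * asl.bas l ∈ M asl {ζ | ζ ≤ ν} := by
    rintro ⟨l, hl⟩
    match l, hl with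
    | [], _ =>
      have h1 : asl.emb ν * asl.bas ⟨[], List.isChain_nil⟩ = asl.bas ⟨[ν], List.isChain_singleton ν⟩ := by
        rw [asl.bas_eq, asl.bas_eq]; simp
      rw [h1]
      exact Submodule.subset_span ⟨_, ⟨ν, List.mem_singleton_self ν, le_refl ν⟩, rfl⟩
    | ξ :: l', hl =>
      by_cases hνξ : ν ≤ ξ
      · have hc : (ν :: ξ :: l').Chain' (· ≤ ·) := List.isChain_cons_cons.mpr ⟨hνξ, hl⟩
        have h1 : asl.emb ν * asl.bas ⟨ξ :: l', hl⟩ = asl.bas ⟨ν :: ξ :: l', hc⟩ := by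
          rw [asl.bas_eq, asl.bas_eq]; simp
        rw [h1]
        exact Submodule.subset_span ⟨_, ⟨ν, List.mem_cons_self, le_refl ν⟩, rfl⟩
      · by_cases hξν : ξ ≤ ν
        · have hlt : ξ < ν := lt_of_le_not_ge hξν hνξ
          have h1 : asl.emb ν * asl.bas ⟨ξ :: l', hl⟩
              = asl.emb ξ * (asl.emb ν * asl.bas ⟨l', hl.tail⟩) := by
            rw [asl.bas_eq, asl.bas_eq]; simp; ring
          rw [h1]
          exact M_mono asl (fun ζ hζ => le_trans hζ hξν) (IH ξ hlt _)
        · -- incomparable case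
          have h1 : asl.emb ν * asl.bas ⟨ξ :: l', hl⟩
              = (asl.emb ξ * asl.emb ν) * asl.bas ⟨l', hl.tail⟩ := by
            rw [asl.bas_eq, asl.bas_eq]; simp; ring
          rw [h1]
          set y := asl.emb ξ * asl.emb ν with hy
          have hrep : y = (asl.bas.repr y).sum fun m c => c • asl.bas m := by
            conv_lhs => rw [← asl.bas.linearCombination_repr y]
            rfl
          rw [hrep, Finsupp.sum_mul]
          apply Submodule.finsuppSum_mem
          intro m hm
          obtain ⟨ζ, hζm, hζξ, hζν⟩ := asl.straighten ξ ν hξν hνξ m hm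
          have hζlt : ζ < ν := lt_of_le_of_ne hζν (by rintro rfl; exact hνξ hζξ)
          obtain ⟨w, hw⟩ := factor asl hζm
          rw [smul_mul_assoc, hw, mul_assoc]
          exact Submodule.smul_mem _ _
            (M_mono asl (fun η hη => le_trans hη hζν) (IH ζ hζlt _))
  intro x
  have hx : x ∈ Submodule.span B (Set.range asl.bas) := by
    rw [asl.bas.span_eq]; trivial
  have hle : Submodule.span B (Set.range asl.bas)
      ≤ (M asl {ζ | ζ ≤ ν}).comap (LinearMap.mulLeft B (asl.emb ν)) := by
    rw [Submodule.span_le]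
    rintro _ ⟨l, rfl⟩
    exact hb l
  exact hle hx

lemma mul_mem_M [Fintype ι] (asl : ASL B A ι 𝒜) {I : Set ι} (hI : IsLowerSet I)
    (a : A) {x : A} (hx : x ∈ M asl I) : a * x ∈ M asl I := by
  induction hx using Submodule.span_induction with
  | mem x h =>
    obtain ⟨l, ⟨ζ, hζl, hζI⟩, rfl⟩ := h
    obtain ⟨w, hw⟩ := factor asl hζl
    rw [hw, mul_comm (asl.emb ζ) w, ← mul_assoc, mul_comm _ (asl.emb ζ)]
    exact M_mono asl (fun η hη => hI hη hζI) (key asl ζ _)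
  | zero => rw [mul_zero]; exact Submodule.zero_mem _
  | add x y hx hy hx' hy' => rw [mul_add]; exact Submodule.add_mem _ hx' hy'
  | smul b x hx hx' => rw [mul_smul_comm]; exact Submodule.smul_mem _ _ hx'

lemma span_eq_M [Fintype ι] (asl : ASL B A ι 𝒜) {I : Set ι} (hI : IsLowerSet I) {x : A} :
    x ∈ Ideal.span (asl.emb '' I) ↔ x ∈ M asl I := by
  constructor
  · intro hx
    induction hx using Submodule.span_induction with
    | mem a h =>
      obtain ⟨ζ, hζI, rfl⟩ := h
      have : asl.emb ζ = asl.bas ⟨[ζ], List.isChain_singleton ζ⟩ := by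
        rw [asl.bas_eq]; simp
      rw [this]
      exact Submodule.subset_span ⟨_, ⟨ζ, List.mem_singleton_self ζ, hζI⟩, rfl⟩
    | zero => exact Submodule.zero_mem _
    | add x y hx hy hx' hy' => exact Submodule.add_mem _ hx' hy'
    | smul a x hx hx' => rw [smul_eq_mul]; exact mul_mem_M asl hI a hx'
  · intro hx
    induction hx using Submodule.span_induction with
    | mem x h =>
      obtain ⟨l, ⟨ζ, hζl, hζI⟩, rfl⟩ := h
      obtain ⟨w, hw⟩ := factor asl hζl
      rw [hw]
      exact Ideal.mul_mem_right w _ (Ideal.subset_span ⟨ζ, hζI, rfl⟩)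
    | zero => exact Submodule.zero_mem _
    | add x y hx hy hx' hy' => exact Submodule.add_mem _ hx' hy'
    | smul b x hx hx' => exact Submodule.smul_of_tower_mem _ b hx'

lemma chain_comparable {l : List ι} (hl : l.Chain' (· ≤ ·)) {a b : ι}
    (ha : a ∈ l) (hb : b ∈ l) : a ≤ b ∨ b ≤ a := by
  have hp : l.Pairwise (fun a b => a ≤ b ∨ b ≤ a) :=
    (List.isChain_iff_pairwise.mp hl).imp Or.inl
  rcases eq_or_ne a b with rfl | hne
  · exact Or.inl le_rfl
  · haveI : Std.Symm (fun a b : ι => a ≤ b ∨ b ≤ a) := ⟨fun x y h => h.symm⟩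
    exact List.Pairwise.forall hp ha hb hne

end ASLAux

theorem stmt_3 {B A ι : Type*} [CommRing B] [CommRing A] [Algebra B A]
    [PartialOrder ι] [Fintype ι] (𝒜 : ℕ → Submodule B A) [GradedAlgebra 𝒜]
    (asl : ASL B A ι 𝒜) (I J : Set ι) (hI : IsLowerSet I) (hJ : IsLowerSet J) :
    Ideal.span (asl.emb '' I) ⊓ Ideal.span (asl.emb '' J) =
      Ideal.span (asl.emb '' (I ∩ J)) := by
  ext x
  rw [Submodule.mem_inf, ASLAux.span_eq_M asl hI, ASLAux.span_eq_M asl hJ,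
    ASLAux.span_eq_M asl (hI.inter hJ), ASLAux.mem_M_iff, ASLAux.mem_M_iff, ASLAux.mem_M_iff]
  constructor
  · rintro ⟨h1, h2⟩ l hl
    obtain ⟨ζ, hζl, hζI⟩ := h1 l hl
    obtain ⟨η, hηl, hηJ⟩ := h2 l hl
    rcases ASLAux.chain_comparable l.2 hζl hηl with h | h
    · exact ⟨ζ, hζl, hζI, hJ h hηJ⟩
    · exact ⟨η, hηl, hI h hζI, hηJ⟩
  · rintro h
    exact ⟨fun l hl => (h l hl).imp fun ζ ⟨h1, h2, _⟩ => ⟨h1, h2⟩,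
      fun l hl => (h l hl).imp fun ζ ⟨h1, h2, h3⟩ => ⟨h1, h3⟩⟩
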